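/- Let p, q be distinct odd primes and X, ℓ, m, n positive integers with X > 2, ℓ > 1, ℓ odd. If X^ℓ - 1 = p^m · q^n, then one of the following holds: (a) ℓ = p, m > 1, X - 1 = p^{m-1}, (X^p - 1)/(X - 1) = p·q^n and q ≡ 1 (mod 2p); (b) ℓ = q, n > 1, X - 1 = q^{n-1}, (X^q - 1)/(X - 1) = p^m·q and p ≡ 1 (mod 2q); (c) ℓ is an odd prime, X - 1 = p^m, (X^ℓ - 1)/(X - 1) = q^n and q ≡ 1 (mod 2ℓ); (d) ℓ is an odd prime, X - 1 = q^n, (X^ℓ - 1)/(X - 1) = p^m and p ≡ 1 (mod 2ℓ). -/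

import Mathlib

/-! Auxiliary lemmas -/

lemma geom_nat (Z r : ℕ) (hZ : 1 ≤ Z) :
    (Z - 1) * ∑ i ∈ Finset.range r, Z ^ i = Z ^ r - 1 := by
  have h1 : 1 ≤ Z ^ r := Nat.one_le_pow _ _ hZ
  have := geom_sum_mul (Z : ℤ) r
  zify [hZ, h1]
  linarith [this]

lemma sum_modEq (Z r t : ℕ) (hZ : 1 ≤ Z) (h1 : t ∣ Z - 1) :
    (∑ i ∈ Finset.range r, Z ^ i) ≡ r [MOD t] := by
  have hmod : Z ≡ 1 [MOD t] := ((Nat.modEq_iff_dvd' hZ).2 h1).symm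
  induction r with
  | zero => rfl
  | succ r ih =>
      rw [Finset.sum_range_succ]
      have : Z ^ r ≡ 1 [MOD t] := by simpa using hmod.pow r
      simpa using ih.add this

lemma L3a (Z r t : ℕ) (hZ : 1 ≤ Z) (h1 : t ∣ Z - 1)
    (h2 : t ∣ ∑ i ∈ Finset.range r, Z ^ i) : t ∣ r := by
  have hmr := sum_modEq Z r t hZ h1
  have h0 : (∑ i ∈ Finset.range r, Z ^ i) ≡ 0 [MOD t] := Nat.modEq_zero_iff_dvd.2 h2
  exact Nat.modEq_zero_iff_dvd.1 (hmr.symm.trans h0)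

lemma T_gt (Z r : ℕ) (hZ : 3 ≤ Z) (hr : 2 ≤ r) :
    r < ∑ i ∈ Finset.range r, Z ^ i := by
  have key : ∀ i ∈ Finset.range r, i + 1 ≤ Z ^ i := by
    intro i _
    exact Nat.lt_pow_self (n := i) (by omega)
  calc r < ∑ i ∈ Finset.range r, (i + 1) := by
        rw [Finset.sum_add_distrib, Finset.sum_const, Finset.card_range, smul_eq_mul, mul_one]
        have : 1 ≤ ∑ i ∈ Finset.range r, i :=
          Finset.single_le_sum (f := fun i => i) (fun i _ => Nat.zero_le i)
            (by simp; omega : (1:ℕ) ∈ Finset.range r)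
        omega
    _ ≤ ∑ i ∈ Finset.range r, Z ^ i := Finset.sum_le_sum key

lemma L4 (Z r : ℕ) (hr : r.Prime) (hrodd : Odd r) (hZ : 1 ≤ Z) (hdvd : r ∣ Z - 1) :
    ¬ r ^ 2 ∣ ∑ i ∈ Finset.range r, Z ^ i := by
  intro hc
  obtain ⟨u, hu⟩ := hdvd
  have hZeq : Z = 1 + r * u := by omega
  haveI : NeZero (r ^ 2) := ⟨pow_ne_zero _ hr.ne_zero⟩
  have hrr : (r : ZMod (r ^ 2)) * (r : ZMod (r ^ 2)) = 0 := by
    have h0 : ((r * r : ℕ) : ZMod (r ^ 2)) = 0 := by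
      rw [← pow_two]; exact ZMod.natCast_self _
    exact_mod_cast h0
  have hz : (Z : ZMod (r ^ 2)) = 1 + (r : ZMod (r ^ 2)) * u := by
    rw [hZeq]; push_cast; ring
  have hpow : ∀ i : ℕ, (Z : ZMod (r ^ 2)) ^ i = 1 + (i : ZMod (r ^ 2)) * r * u := by
    intro i
    induction i with
    | zero => simp
    | succ i ih =>
        rw [pow_succ (Z : ZMod (r ^ 2)) i, ih, hz]
        push_cast
        linear_combination ((i : ZMod (r ^ 2)) * u * u) * hrr
  obtain ⟨v, hv⟩ : ∃ v, r - 1 = 2 * v := by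
    obtain ⟨w, hw⟩ := hrodd; exact ⟨w, by omega⟩
  have hgauss : (∑ i ∈ Finset.range r, i) = r * v := by
    have h2 : (∑ i ∈ Finset.range r, i) * 2 = r * (r - 1) := Finset.sum_range_id_mul_two r
    have h3 : (∑ i ∈ Finset.range r, i) * 2 = (r * v) * 2 := by rw [h2, hv]; ring
    omega
  have hsum : ((∑ i ∈ Finset.range r, Z ^ i : ℕ) : ZMod (r ^ 2)) = (r : ZMod (r ^ 2)) := by
    push_cast
    rw [Finset.sum_congr rfl (fun i _ => hpow i)]
    rw [Finset.sum_add_distrib, Finset.sum_const, Finset.card_range]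
    have hs : (∑ i ∈ Finset.range r, ((i : ZMod (r ^ 2)) * r * u))
        = ((∑ i ∈ Finset.range r, i : ℕ) : ZMod (r ^ 2)) * r * u := by
      push_cast
      rw [Finset.sum_mul, Finset.sum_mul]
    rw [hs, hgauss]
    push_cast
    have h3 : ((r : ZMod (r ^ 2)) * v) * r * u = 0 := by
      linear_combination ((v : ZMod (r ^ 2)) * u) * hrr
    rw [h3]
    simp
  have h0 : ((∑ i ∈ Finset.range r, Z ^ i : ℕ) : ZMod (r ^ 2)) = 0 :=
    (ZMod.natCast_eq_zero_iff _ _).2 hc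
  rw [hsum] at h0
  have hrd : r ^ 2 ∣ r := (ZMod.natCast_eq_zero_iff _ _).1 h0
  have h2 := hr.two_le
  have := Nat.le_of_dvd (by omega) hrd
  nlinarith

lemma T_dvd (X s r ℓ : ℕ) (hX : 1 ≤ X) (hd : s * r ∣ ℓ) :
    (∑ i ∈ Finset.range r, (X ^ s) ^ i) ∣ X ^ ℓ - 1 := by
  obtain ⟨k, hk⟩ := hd
  have h1 : (X ^ s - 1) * ∑ i ∈ Finset.range r, (X ^ s) ^ i = X ^ (s * r) - 1 := by
    rw [geom_nat _ _ (Nat.one_le_pow _ _ hX), ← pow_mul]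
  have h2 : X ^ (s * r) - 1 ∣ X ^ ℓ - 1 := by
    have h3 := Nat.sub_dvd_pow_sub_pow (X ^ (s * r)) 1 k
    rw [one_pow, ← pow_mul, ← hk] at h3
    exact h3
  exact (h1 ▸ dvd_mul_left _ _).trans h2

lemma T_dvd1 (X r ℓ : ℕ) (hX : 1 ≤ X) (hd : r ∣ ℓ) :
    (∑ i ∈ Finset.range r, X ^ i) ∣ X ^ ℓ - 1 := by
  have := T_dvd X 1 r ℓ hX (by simpa using hd)
  simpa using this

lemma order_key (q X : ℕ) (hq : q.Prime) (hqX : ¬ q ∣ X) (hX : 1 ≤ X) (j : ℕ) :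
    q ∣ X ^ j - 1 ↔ orderOf (X : ZMod q) ∣ j := by
  have h1 : (X ^ j ≡ 1 [MOD q]) ↔ q ∣ X ^ j - 1 := by
    constructor
    · intro hh; exact (Nat.modEq_iff_dvd' (Nat.one_le_pow _ _ hX)).1 hh.symm
    · intro hh; exact ((Nat.modEq_iff_dvd' (Nat.one_le_pow _ _ hX)).2 hh).symm
  rw [← h1, ← ZMod.natCast_eq_natCast_iff]
  push_cast
  exact Iff.symm orderOf_dvd_iff_pow_eq_one

/-- Key contradiction: a geometric sum with prime length `r`, over base `Z` with
`p ∣ Z - 1`, dividing `p ^ m * q ^ n` but not divisible by `q`, is impossible. -/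
lemma helper (p q r Z m n : ℕ) (hp : p.Prime) (hpodd : Odd p) (hq : q.Prime)
    (hr : r.Prime) (hrodd : Odd r) (hZ : 3 ≤ Z) (hpZ : p ∣ Z - 1)
    (hdvd : (∑ i ∈ Finset.range r, Z ^ i) ∣ p ^ m * q ^ n)
    (hqT : ¬ q ∣ ∑ i ∈ Finset.range r, Z ^ i) : False := by
  set T := ∑ i ∈ Finset.range r, Z ^ i with hT
  have hTr : r < T := T_gt Z r hZ hr.two_le
  have hcop : Nat.Coprime T (q ^ n) :=
    Nat.Coprime.pow_right _ ((hq.coprime_iff_not_dvd.2 hqT).symm)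
  have hTp : T ∣ p ^ m := (Nat.Coprime.dvd_of_dvd_mul_right hcop) hdvd
  obtain ⟨c, hcm, hTc⟩ := (Nat.dvd_prime_pow hp).1 hTp
  have hc1 : 1 ≤ c := by
    rcases Nat.eq_zero_or_pos c with h0 | hh
    · rw [h0, pow_zero] at hTc; have := hr.two_le; omega
    · exact hh
  have hpT : p ∣ T := by rw [hTc]; exact dvd_pow_self p (by omega)
  have hpr : p ∣ r := L3a Z r p (by omega) hpZ hpT
  have hpr' : p = r := (Nat.prime_dvd_prime_iff_eq hp hr).1 hpr
  have hL4 := L4 Z r hr hrodd (by omega) (hpr' ▸ hpZ)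
  have hc2 : c < 2 := by
    by_contra hcc
    apply hL4
    rw [← hT, hTc, ← hpr']
    exact pow_dvd_pow p (by omega)
  have hc3 : c = 1 := by omega
  rw [hc3, pow_one] at hTc
  omega

/-- Main auxiliary lemma, assuming `p ∣ X - 1` and `¬ q ∣ X - 1`. -/
lemma aux_main (p q X ℓ m n : ℕ) (hp : p.Prime) (hpodd : Odd p)
    (hq : q.Prime) (hqodd : Odd q) (hpq : p ≠ q)
    (hX : 2 < X) (hℓ : 1 < ℓ) (hℓodd : Odd ℓ) (hm : 0 < m) (hn : 0 < n)
    (h : X ^ ℓ - 1 = p ^ m * q ^ n) (hpd : p ∣ X - 1) (hqd : ¬ q ∣ X - 1) :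
    (ℓ = p ∧ 1 < m ∧ X - 1 = p ^ (m - 1) ∧
      (∑ i ∈ Finset.range p, X ^ i) = p * q ^ n ∧ q ≡ 1 [MOD 2 * p]) ∨
    (ℓ.Prime ∧ X - 1 = p ^ m ∧
      (∑ i ∈ Finset.range ℓ, X ^ i) = q ^ n ∧ q ≡ 1 [MOD 2 * ℓ]) := by
  have hX1 : 1 ≤ X := by omega
  have hXℓ1 : 1 ≤ X ^ ℓ := Nat.one_le_pow _ _ hX1
  have hqXl : q ∣ X ^ ℓ - 1 := by
    rw [h]; exact Dvd.dvd.mul_left (dvd_pow_self q hn.ne') _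
  have hqX : ¬ q ∣ X := by
    intro hd
    have h1 : q ∣ X ^ ℓ := dvd_pow hd (by omega)
    have h2 : q ∣ X ^ ℓ - (X ^ ℓ - 1) := Nat.dvd_sub h1 hqXl
    have h3 : X ^ ℓ - (X ^ ℓ - 1) = 1 := by omega
    rw [h3] at h2
    have := Nat.le_of_dvd one_pos h2
    have := hq.two_le
    omega
  haveI := Fact.mk hq
  set e := orderOf (X : ZMod q) with he
  have key : ∀ j : ℕ, q ∣ X ^ j - 1 ↔ e ∣ j := order_key q X hq hqX hX1
  have heq1 : e ∣ q - 1 := by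
    have hx0 : (X : ZMod q) ≠ 0 := by
      rw [Ne, ZMod.natCast_eq_zero_iff]; exact hqX
    exact ZMod.orderOf_dvd_card_sub_one hx0
  have heℓ : e ∣ ℓ := (key ℓ).1 hqXl
  have he0 : e ≠ 0 := by
    intro h0
    rw [h0] at heℓ
    omega
  have he1 : 1 < e := by
    rcases Nat.lt_or_ge 1 e with hh | hh
    · exact hh
    · exfalso
      have he1' : e = 1 := by omega
      apply hqd
      have := (key 1).2 (by rw [he1'])
      simpa using this
  have hodd_of_dvd : ∀ r : ℕ, r ∣ ℓ → Odd r := by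
    intro r hrℓ
    rcases Nat.even_or_odd r with hev | hod
    · exfalso
      have : Even ℓ := (even_iff_two_dvd.2 ((even_iff_two_dvd.1 hev).trans hrℓ))
      exact (Nat.not_odd_iff_even.2 this) hℓodd
    · exact hod
  -- every prime factor of ℓ equals e
  have hprfac : ∀ r : ℕ, r.Prime → r ∣ ℓ → r = e := by
    intro r hr hrℓ
    by_contra hne
    have hrodd : Odd r := hodd_of_dvd r hrℓ
    have hTdvd : (∑ i ∈ Finset.range r, X ^ i) ∣ p ^ m * q ^ n :=
      h ▸ T_dvd1 X r ℓ hX1 hrℓ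
    have hqT : ¬ q ∣ ∑ i ∈ Finset.range r, X ^ i := by
      intro hqd2
      have hq2 : q ∣ X ^ r - 1 := hqd2.trans (T_dvd1 X r r hX1 dvd_rfl)
      have her : e ∣ r := (key r).1 hq2
      have : e = r := (hr.eq_one_or_self_of_dvd e her).resolve_left (by omega)
      exact hne this.symm
    exact helper p q r X m n hp hpodd hq hr hrodd (by omega) hpd hTdvd hqT
  have heprime : e.Prime := by
    have hmf := Nat.minFac_prime (show ℓ ≠ 1 by omega)
    have h2 := hprfac _ hmf (Nat.minFac_dvd ℓ)
    rwa [h2] at hmf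
  have hℓe : ℓ = e := by
    by_contra hne
    obtain ⟨k, hk⟩ := id heℓ
    have hk1 : k ≠ 1 := by
      intro h1; rw [h1, mul_one] at hk; exact hne hk
    have hk0 : k ≠ 0 := by
      intro h0; rw [h0, mul_zero] at hk; omega
    have hkf := Nat.minFac_prime hk1
    have hke : k.minFac = e := hprfac _ hkf (hk ▸ (Nat.minFac_dvd k).mul_left e)
    have hee : e * e ∣ ℓ := by
      rw [hk]
      exact mul_dvd_mul_left e (hke ▸ Nat.minFac_dvd k)
    have heodd : Odd e := hodd_of_dvd e heℓ
    have hZ3 : 3 ≤ X ^ e := le_trans (by omega) (Nat.le_self_pow he0 X)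
    have hpZ : p ∣ X ^ e - 1 :=
      hpd.trans (by simpa using Nat.sub_dvd_pow_sub_pow X 1 e)
    have hTdvd : (∑ i ∈ Finset.range e, (X ^ e) ^ i) ∣ p ^ m * q ^ n :=
      h ▸ T_dvd X e e ℓ hX1 hee
    have hqT : ¬ q ∣ ∑ i ∈ Finset.range e, (X ^ e) ^ i := by
      intro hqd2
      have hqZ : q ∣ X ^ e - 1 := (key e).2 dvd_rfl
      have hqe : q ∣ e := L3a (X ^ e) e q (Nat.one_le_pow _ _ hX1) hqZ hqd2
      have hqe' : q = e := (heprime.eq_one_or_self_of_dvd q hqe).resolve_left hq.ne_one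
      have hle := Nat.le_of_dvd (by have := hq.two_le; omega) heq1
      omega
    exact helper p q e (X ^ e) m n hp hpodd hq heprime (hodd_of_dvd e heℓ) hZ3 hpZ hTdvd hqT
  have hℓp : ℓ.Prime := by rw [hℓe]; exact heprime
  have hqmod : q ≡ 1 [MOD 2 * ℓ] := by
    have h2 : 2 ∣ q - 1 := by
      obtain ⟨w, hw⟩ := hqodd; exact ⟨w, by omega⟩
    have hℓq : ℓ ∣ q - 1 := by rw [hℓe]; exact heq1
    have hco : Nat.Coprime 2 ℓ := Nat.coprime_two_left.2 hℓodd
    have hdd : 2 * ℓ ∣ q - 1 := Nat.Coprime.mul_dvd_of_dvd_of_dvd hco h2 hℓq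
    exact ((Nat.modEq_iff_dvd' (by have := hq.two_le; omega : 1 ≤ q)).2 hdd).symm
  have hXd : X - 1 ∣ p ^ m * q ^ n :=
    h ▸ (by simpa using Nat.sub_dvd_pow_sub_pow X 1 ℓ)
  have hXp : X - 1 ∣ p ^ m := Nat.Coprime.dvd_of_dvd_mul_right
    (Nat.Coprime.pow_right _ ((hq.coprime_iff_not_dvd.2 hqd).symm)) hXd
  obtain ⟨a, ham, ha⟩ := (Nat.dvd_prime_pow hp).1 hXp
  have ha1 : 1 ≤ a := by
    rcases Nat.eq_zero_or_pos a with h0 | hh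
    · rw [h0, pow_zero] at ha; omega
    · exact hh
  have hgeom : (X - 1) * (∑ i ∈ Finset.range ℓ, X ^ i) = X ^ ℓ - 1 := geom_nat X ℓ hX1
  have hps : p ^ a * (∑ i ∈ Finset.range ℓ, X ^ i) = p ^ a * (p ^ (m - a) * q ^ n) := by
    rw [← mul_assoc, ← pow_add, Nat.add_sub_cancel' ham, ← h, ← hgeom, ha]
  have hSeq : (∑ i ∈ Finset.range ℓ, X ^ i) = p ^ (m - a) * q ^ n :=
    Nat.eq_of_mul_eq_mul_left (pow_pos hp.pos a) hps
  rcases Nat.eq_zero_or_pos (m - a) with hma | hma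
  · right
    have ham' : a = m := by omega
    refine ⟨hℓp, by rw [ha, ham'], ?_, hqmod⟩
    rw [hSeq, hma, pow_zero, one_mul]
  · left
    have hpS : p ∣ ∑ i ∈ Finset.range ℓ, X ^ i := by
      rw [hSeq]; exact Dvd.dvd.mul_right (dvd_pow_self p hma.ne') _
    have hpℓ : p ∣ ℓ := L3a X ℓ p hX1 hpd hpS
    have hpℓ' : ℓ = p := ((hℓp.eq_one_or_self_of_dvd p hpℓ).resolve_left hp.ne_one).symm
    subst hpℓ'
    have hL4 := L4 X ℓ hℓp hℓodd hX1 hpd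
    have hma1 : m - a = 1 := by
      by_contra hmm
      apply hL4
      rw [hSeq]
      exact Dvd.dvd.mul_right (pow_dvd_pow ℓ (by omega)) _
    refine ⟨rfl, by omega, by rw [ha]; congr 1; omega, ?_, hqmod⟩
    rw [hSeq, hma1, pow_one]

theorem stmt_9 (p q X ℓ m n : ℕ) (hp : p.Prime) (hpodd : Odd p)
    (hq : q.Prime) (hqodd : Odd q) (hpq : p ≠ q)
    (hX : 2 < X) (hℓ : 1 < ℓ) (hℓodd : Odd ℓ) (hm : 0 < m) (hn : 0 < n)
    (h : X ^ ℓ - 1 = p ^ m * q ^ n) :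
    (ℓ = p ∧ 1 < m ∧ X - 1 = p ^ (m - 1) ∧
      (∑ i ∈ Finset.range p, X ^ i) = p * q ^ n ∧ q ≡ 1 [MOD 2 * p]) ∨
    (ℓ = q ∧ 1 < n ∧ X - 1 = q ^ (n - 1) ∧
      (∑ i ∈ Finset.range q, X ^ i) = p ^ m * q ∧ p ≡ 1 [MOD 2 * q]) ∨
    (ℓ.Prime ∧ X - 1 = p ^ m ∧
      (∑ i ∈ Finset.range ℓ, X ^ i) = q ^ n ∧ q ≡ 1 [MOD 2 * ℓ]) ∨
    (ℓ.Prime ∧ X - 1 = q ^ n ∧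
      (∑ i ∈ Finset.range ℓ, X ^ i) = p ^ m ∧ p ≡ 1 [MOD 2 * ℓ]) := by
  have hX1 : 1 ≤ X := by omega
  have hXd : X - 1 ∣ p ^ m * q ^ n := h ▸ (by simpa using Nat.sub_dvd_pow_sub_pow X 1 ℓ)
  -- at least one of p, q divides X - 1
  have hone : p ∣ X - 1 ∨ q ∣ X - 1 := by
    have hf := Nat.minFac_prime (show X - 1 ≠ 1 by omega)
    have hfd : (X - 1).minFac ∣ p ^ m * q ^ n := (Nat.minFac_dvd _).trans hXd
    rcases (Nat.Prime.dvd_mul hf).1 hfd with h1 | h1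
    · left
      have h2 := hf.dvd_of_dvd_pow h1
      have h3 := (Nat.prime_dvd_prime_iff_eq hf hp).1 h2
      exact h3 ▸ Nat.minFac_dvd _
    · right
      have h2 := hf.dvd_of_dvd_pow h1
      have h3 := (Nat.prime_dvd_prime_iff_eq hf hq).1 h2
      exact h3 ▸ Nat.minFac_dvd _
  -- not both
  have hnotboth : ¬ (p ∣ X - 1 ∧ q ∣ X - 1) := by
    rintro ⟨hpd, hqd⟩
    have hr := Nat.minFac_prime (show ℓ ≠ 1 by omega)
    set r := ℓ.minFac with hrdef
    have hrodd : Odd r := by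
      rcases Nat.even_or_odd r with hev | hod
      · exfalso
        have h2 : (2 : ℕ) ∣ ℓ := (even_iff_two_dvd.1 hev).trans (Nat.minFac_dvd ℓ)
        have : Even ℓ := even_iff_two_dvd.2 h2
        exact (Nat.not_odd_iff_even.2 this) hℓodd
      · exact hod
    have hTdvd : (∑ i ∈ Finset.range r, X ^ i) ∣ p ^ m * q ^ n :=
      h ▸ T_dvd1 X r ℓ hX1 (Nat.minFac_dvd ℓ)
    have hT1 : 1 < ∑ i ∈ Finset.range r, X ^ i :=
      lt_trans (by have := hr.two_le; omega) (T_gt X r (by omega) hr.two_le)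
    have htf := Nat.minFac_prime (show (∑ i ∈ Finset.range r, X ^ i) ≠ 1 by omega)
    set t := (∑ i ∈ Finset.range r, X ^ i).minFac with htdef
    have htT : t ∣ ∑ i ∈ Finset.range r, X ^ i := Nat.minFac_dvd _
    have htpq : t = p ∨ t = q := by
      rcases (Nat.Prime.dvd_mul htf).1 (htT.trans hTdvd) with h1 | h1
      · exact Or.inl ((Nat.prime_dvd_prime_iff_eq htf hp).1 (htf.dvd_of_dvd_pow h1))
      · exact Or.inr ((Nat.prime_dvd_prime_iff_eq htf hq).1 (htf.dvd_of_dvd_pow h1))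
    rcases htpq with ht | ht
    · -- t = p, so p ∣ T, p = r, and q ∤ T
      have hpT : p ∣ ∑ i ∈ Finset.range r, X ^ i := ht ▸ htT
      have hpr : p = r :=
        (Nat.prime_dvd_prime_iff_eq hp hr).1 (L3a X r p hX1 hpd hpT)
      have hqT : ¬ q ∣ ∑ i ∈ Finset.range r, X ^ i := by
        intro hq2
        have hqr : q = r :=
          (Nat.prime_dvd_prime_iff_eq hq hr).1 (L3a X r q hX1 hqd hq2)
        exact hpq (hpr.trans hqr.symm)
      exact helper p q r X m n hp hpodd hq hr hrodd (by omega) hpd hTdvd hqT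
    · -- t = q, symmetric
      have hqT : q ∣ ∑ i ∈ Finset.range r, X ^ i := ht ▸ htT
      have hqr : q = r :=
        (Nat.prime_dvd_prime_iff_eq hq hr).1 (L3a X r q hX1 hqd hqT)
      have hpT : ¬ p ∣ ∑ i ∈ Finset.range r, X ^ i := by
        intro hp2
        have hpr : p = r :=
          (Nat.prime_dvd_prime_iff_eq hp hr).1 (L3a X r p hX1 hpd hp2)
        exact hpq (hpr.trans hqr.symm)
      have hTdvd' : (∑ i ∈ Finset.range r, X ^ i) ∣ q ^ n * p ^ m := by
        rw [mul_comm]; exact hTdvd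
      exact helper q p r X n m hq hqodd hp hr hrodd (by omega) hqd hTdvd' hpT
  rcases hone with hpd | hqd
  · have hqd : ¬ q ∣ X - 1 := fun hh => hnotboth ⟨hpd, hh⟩
    rcases aux_main p q X ℓ m n hp hpodd hq hqodd hpq hX hℓ hℓodd hm hn h hpd hqd with
      hcase | hcase
    · exact Or.inl hcase
    · exact Or.inr (Or.inr (Or.inl hcase))
  · have hpd : ¬ p ∣ X - 1 := fun hh => hnotboth ⟨hh, hqd⟩
    have h' : X ^ ℓ - 1 = q ^ n * p ^ m := by rw [h, mul_comm]
    rcases aux_main q p X ℓ n m hq hqodd hp hpodd (Ne.symm hpq) hX hℓ hℓodd hn hm h' hqd hpd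
      with hcase | hcase
    · obtain ⟨h1, h2, h3, h4, h5⟩ := hcase
      exact Or.inr (Or.inl ⟨h1, h2, h3, h4.trans (mul_comm _ _), h5⟩)
    · obtain ⟨h1, h2, h3, h4⟩ := hcase
      exact Or.inr (Or.inr (Or.inr ⟨h1, h2, h3, h4⟩))
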